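/- For all complex numbers z, w with |z| = |w| = 1, if the diagonal matrices diag(z, z̄, z, z̄) and diag(w², 1, w̄², 1) are conjugate in SU(4) (i.e., there exists g ∈ SU(4) with g · diag(w²,1,w̄²,1) · g⁻¹ = diag(z,z̄,z,z̄)), then z = 1 and w² = 1, so both matrices equal the identity I₄. Consequently the biquotient action of SU(2)² on SU(4) determined by the pair (2φ₁, φ₀ + φ₂) is effectively free. -/

import Mathlib

open Matrix

/-- For unit complex numbers `z, w`, if `diag(z, z̄, z, z̄)` and
`diag(w², 1, w̄², 1)` are conjugate in `SU(4)`, then `z = 1` and `w² = 1`, so both matrices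
are the identity.  Consequently the biquotient action of `SU(2)²` on `SU(4)` determined by
the pair `(2φ₁, φ₀ + φ₂)` is effectively free. -/
theorem su4_pair_effectively_free (z w : ℂ) (hz : ‖z‖ = 1) (hw : ‖w‖ = 1)
    (h : ∃ g : Matrix (Fin 4) (Fin 4) ℂ, gᴴ * g = 1 ∧ g.det = 1 ∧
      g * Matrix.diagonal ![w ^ 2, 1, (starRingEnd ℂ w) ^ 2, 1] * g⁻¹ =
        Matrix.diagonal ![z, starRingEnd ℂ z, z, starRingEnd ℂ z]) :
    z = 1 ∧ w ^ 2 = 1 ∧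
      Matrix.diagonal ![z, starRingEnd ℂ z, z, starRingEnd ℂ z] = 1 ∧
      Matrix.diagonal ![w ^ 2, 1, (starRingEnd ℂ w) ^ 2, 1] = 1 := by
  obtain ⟨g, hg1, hg2, hconj⟩ := h
  have hginv : g⁻¹ * g = 1 := Matrix.nonsing_inv_mul g (by simp [hg2])
  have hgA : g * Matrix.diagonal ![w ^ 2, 1, (starRingEnd ℂ w) ^ 2, 1]
      = Matrix.diagonal ![z, starRingEnd ℂ z, z, starRingEnd ℂ z] * g := by
    have := congrArg (· * g) hconj
    simpa [Matrix.mul_assoc, hginv] using this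
  have key : ∀ i j, g i j * (![w ^ 2, 1, (starRingEnd ℂ w) ^ 2, 1] j)
      = (![z, starRingEnd ℂ z, z, starRingEnd ℂ z] i) * g i j := by
    intro i j
    have := congrFun (congrFun hgA i) j
    simpa [Matrix.mul_diagonal, Matrix.diagonal_mul] using this
  have hz1 : z = 1 := by
    by_contra hz1
    have hs1 : starRingEnd ℂ z ≠ 1 := by
      intro hs
      apply hz1
      have := congrArg (starRingEnd ℂ) hs
      simpa using this
    have hbne : ∀ i : Fin 4, (![z, starRingEnd ℂ z, z, starRingEnd ℂ z] i) ≠ 1 := by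
      intro i; fin_cases i <;> simpa using (by first | exact hz1 | exact hs1)
    have hcol : ∀ i : Fin 4, g i 1 = 0 := by
      intro i
      have h0 : g i 1 = (![z, starRingEnd ℂ z, z, starRingEnd ℂ z] i) * g i 1 := by
        simpa using key i 1
      have h1 : ((![z, starRingEnd ℂ z, z, starRingEnd ℂ z] i) - 1) * g i 1 = 0 := by
        rw [sub_mul, one_mul, ← h0, sub_self]
      rcases mul_eq_zero.mp h1 with h2 | h2
      · exact absurd (sub_eq_zero.mp h2) (hbne i)
      · exact h2
    have : g.det = 0 := Matrix.det_eq_zero_of_column_eq_zero 1 hcol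
    rw [hg2] at this
    exact one_ne_zero this
  have hsz : starRingEnd ℂ z = 1 := by rw [hz1]; simp
  have hB : Matrix.diagonal ![z, starRingEnd ℂ z, z, starRingEnd ℂ z] = 1 := by
    rw [hz1]
    ext i j
    fin_cases i <;> fin_cases j <;> simp [Matrix.diagonal, Matrix.one_apply]
  have hA : Matrix.diagonal ![w ^ 2, 1, (starRingEnd ℂ w) ^ 2, 1] = 1 := by
    have h3 : g * Matrix.diagonal ![w ^ 2, 1, (starRingEnd ℂ w) ^ 2, 1] = g := by
      rw [hgA, hB, Matrix.one_mul]
    have := congrArg (fun M => g⁻¹ * M) h3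
    simpa [← Matrix.mul_assoc, hginv] using this
  have hw2 : w ^ 2 = 1 := by
    have := congrFun (congrFun hA 0) 0
    simpa [Matrix.diagonal, Matrix.one_apply] using this
  exact ⟨hz1, hw2, hB, hA⟩
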